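/- If U and V are independent uniform [0,1] random variables, then Var( 2/3 - |U - V| - U(1-U) - V(1-V) ) = 2/45. -/

import Mathlib

open MeasureTheory ProbabilityTheory Set

lemma poly_int (a b c0 c1 c2 c3 c4 : ℝ) :
    ∫ u in a..b, (c0 + c1*u + c2*u^2 + c3*u^3 + c4*u^4) =
      (c0*b + c1/2*b^2 + c2/3*b^3 + c3/4*b^4 + c4/5*b^5)
      - (c0*a + c1/2*a^2 + c2/3*a^3 + c3/4*a^4 + c4/5*a^5) := by
  have h : ∀ u : ℝ, HasDerivAt
      (fun x : ℝ => c0*x + c1/2*x^2 + c2/3*x^3 + c3/4*x^4 + c4/5*x^5)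
      (c0 + c1*u + c2*u^2 + c3*u^3 + c4*u^4) u := by
    intro u
    have h1 := ((hasDerivAt_id u).const_mul c0)
    have h2 := ((hasDerivAt_pow 2 u).const_mul (c1/2))
    have h3 := ((hasDerivAt_pow 3 u).const_mul (c2/3))
    have h4 := ((hasDerivAt_pow 4 u).const_mul (c3/4))
    have h5 := ((hasDerivAt_pow 5 u).const_mul (c4/5))
    have := (((h1.add h2).add h3).add h4).add h5
    refine this.congr_deriv ?_
    push_cast; ring
  rw [intervalIntegral.integral_eq_sub_of_hasDerivAt (fun u _ => h u)
    ((by fun_prop : Continuous fun u : ℝ => c0 + c1*u + c2*u^2 + c3*u^3 + c4*u^4).intervalIntegrable a b)]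

lemma inner_mean (v : ℝ) (hv0 : 0 ≤ v) (hv1 : v ≤ 1) :
    ∫ u in (0:ℝ)..1, (2/3 - |u - v| - u*(1-u) - v*(1-v)) = 0 := by
  have hi1 : IntervalIntegrable (fun u : ℝ => 2/3 - |u - v| - u*(1-u) - v*(1-v))
      volume 0 v := ((by fun_prop : Continuous fun u : ℝ => 2/3 - |u - v| - u*(1-u) - v*(1-v))).intervalIntegrable _ _
  have hi2 : IntervalIntegrable (fun u : ℝ => 2/3 - |u - v| - u*(1-u) - v*(1-v))
      volume v 1 := ((by fun_prop : Continuous fun u : ℝ => 2/3 - |u - v| - u*(1-u) - v*(1-v))).intervalIntegrable _ _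
  rw [← intervalIntegral.integral_add_adjacent_intervals hi1 hi2]
  have e1 : ∫ u in (0:ℝ)..v, (2/3 - |u - v| - u*(1-u) - v*(1-v))
      = ∫ u in (0:ℝ)..v, ((2/3 - 2*v + v^2) + 0*u + 1*u^2 + 0*u^3 + 0*u^4) := by
    apply intervalIntegral.integral_congr
    intro u hu
    dsimp only
    rw [Set.uIcc_of_le hv0] at hu
    rw [abs_of_nonpos (by linarith [hu.2])]
    ring
  have e2 : ∫ u in v..(1:ℝ), (2/3 - |u - v| - u*(1-u) - v*(1-v))
      = ∫ u in v..(1:ℝ), ((2/3 + v^2) + (-2)*u + 1*u^2 + 0*u^3 + 0*u^4) := by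
    apply intervalIntegral.integral_congr
    intro u hu
    dsimp only
    rw [Set.uIcc_of_le hv1] at hu
    rw [abs_of_nonneg (by linarith [hu.1])]
    ring
  rw [e1, e2, poly_int, poly_int]
  ring

lemma inner_sq (v : ℝ) (hv0 : 0 ≤ v) (hv1 : v ≤ 1) :
    ∫ u in (0:ℝ)..1, (2/3 - |u - v| - u*(1-u) - v*(1-v))^2
      = 4/45 - 4/3*v^2 + 8/3*v^3 - 4/3*v^4 := by
  have hi1 : IntervalIntegrable (fun u : ℝ => (2/3 - |u - v| - u*(1-u) - v*(1-v))^2)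
      volume 0 v := ((by fun_prop : Continuous fun u : ℝ => (2/3 - |u - v| - u*(1-u) - v*(1-v))^2)).intervalIntegrable _ _
  have hi2 : IntervalIntegrable (fun u : ℝ => (2/3 - |u - v| - u*(1-u) - v*(1-v))^2)
      volume v 1 := ((by fun_prop : Continuous fun u : ℝ => (2/3 - |u - v| - u*(1-u) - v*(1-v))^2)).intervalIntegrable _ _
  rw [← intervalIntegral.integral_add_adjacent_intervals hi1 hi2]
  have e1 : ∫ u in (0:ℝ)..v, (2/3 - |u - v| - u*(1-u) - v*(1-v))^2
      = ∫ u in (0:ℝ)..v, ((4/9 - 8/3*v + 16/3*v^2 - 4*v^3 + v^4) + 0*u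
          + (4/3 - 4*v + 2*v^2)*u^2 + 0*u^3 + 1*u^4) := by
    apply intervalIntegral.integral_congr
    intro u hu
    dsimp only
    rw [Set.uIcc_of_le hv0] at hu
    rw [abs_of_nonpos (by linarith [hu.2])]
    ring
  have e2 : ∫ u in v..(1:ℝ), (2/3 - |u - v| - u*(1-u) - v*(1-v))^2
      = ∫ u in v..(1:ℝ), ((4/9 + 4/3*v^2 + v^4) + (-8/3 - 4*v^2)*u
          + (16/3 + 2*v^2)*u^2 + (-4)*u^3 + 1*u^4) := by
    apply intervalIntegral.integral_congr
    intro u hu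
    dsimp only
    rw [Set.uIcc_of_le hv1] at hu
    rw [abs_of_nonneg (by linarith [hu.1])]
    ring
  rw [e1, e2, poly_int, poly_int]
  ring

theorem variance_hajek_summand
    {Ω : Type*} [MeasureSpace Ω] [IsProbabilityMeasure (ℙ : Measure Ω)]
    (U V : Ω → ℝ) (hU : Measurable U) (hV : Measurable V)
    (hInd : IndepFun U V ℙ)
    (hUunif : Measure.map U ℙ = volume.restrict (Set.Icc (0:ℝ) 1))
    (hVunif : Measure.map V ℙ = volume.restrict (Set.Icc (0:ℝ) 1)) :
    variance (fun ω => 2/3 - |U ω - V ω| - U ω * (1 - U ω) - V ω * (1 - V ω)) ℙ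
      = 2/45 := by
  have hμ : True := trivial
  set g : ℝ × ℝ → ℝ := fun p => 2/3 - |p.1 - p.2| - p.1 * (1 - p.1) - p.2 * (1 - p.2) with hg
  have hgc : Continuous g := by fun_prop
  have hmap : Measure.map (fun ω => (U ω, V ω)) ℙ
      = (volume.restrict (Set.Icc (0:ℝ) 1)).prod (volume.restrict (Set.Icc (0:ℝ) 1)) := by
    rw [(ProbabilityTheory.indepFun_iff_map_prod_eq_prod_map_map
      hU.aemeasurable hV.aemeasurable).mp hInd, hUunif, hVunif]
  have hUVmeas : Measurable fun ω => (U ω, V ω) := hU.prodMk hV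
  -- a.e. range bounds
  have hae : ∀ (X : Ω → ℝ), Measurable X →
      Measure.map X ℙ = volume.restrict (Set.Icc (0:ℝ) 1) →
      ∀ᵐ ω ∂ℙ, X ω ∈ Set.Icc (0:ℝ) 1 := by
    intro X hX hXm
    have h0 : ℙ (X ⁻¹' (Set.Icc (0:ℝ) 1)ᶜ) = 0 := by
      rw [← Measure.map_apply hX measurableSet_Icc.compl, hXm,
        Measure.restrict_apply measurableSet_Icc.compl]
      simp
    rw [MeasureTheory.ae_iff]
    exact h0
  have hU01 := hae U hU hUunif
  have hV01 := hae V hV hVunif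
  -- Memℒp
  have hWsm : AEStronglyMeasurable
      (fun ω => 2/3 - |U ω - V ω| - U ω * (1 - U ω) - V ω * (1 - V ω)) ℙ :=
    ((hgc.measurable.comp hUVmeas).aestronglyMeasurable)
  have hmem : MemLp (fun ω => 2/3 - |U ω - V ω| - U ω * (1 - U ω) - V ω * (1 - V ω)) 2 ℙ := by
    apply MemLp.of_bound hWsm 3
    filter_upwards [hU01, hV01] with ω hu hv
    obtain ⟨hu0, hu1⟩ := hu
    obtain ⟨hv0, hv1⟩ := hv
    rw [Real.norm_eq_abs, abs_le]
    have habs : |U ω - V ω| ≤ 1 := abs_le.mpr ⟨by linarith, by linarith⟩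
    have habs0 : 0 ≤ |U ω - V ω| := abs_nonneg _
    constructor <;> nlinarith
  rw [variance_eq_sub hmem]
  -- transfer integrals to the product measure
  have hint : ∀ (f : ℝ × ℝ → ℝ), Continuous f →
      Integrable f ((volume.restrict (Set.Icc (0:ℝ) 1)).prod
        (volume.restrict (Set.Icc (0:ℝ) 1))) := by
    intro f hf
    rw [Measure.prod_restrict]
    have : IntegrableOn f (Set.Icc (0:ℝ) 1 ×ˢ Set.Icc (0:ℝ) 1)
        (volume.prod volume) := by
      rw [← Measure.volume_eq_prod]
      exact hf.continuousOn.integrableOn_compact (isCompact_Icc.prod isCompact_Icc)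
    exact this
  have key : ∀ (f : ℝ × ℝ → ℝ), Continuous f →
      ∫ ω, f (U ω, V ω) ∂ℙ = ∫ x in Set.Icc (0:ℝ) 1, ∫ y in Set.Icc (0:ℝ) 1, f (x, y) := by
    intro f hf
    rw [← MeasureTheory.integral_map hUVmeas.aemeasurable
      (hf.aestronglyMeasurable), hmap,
      MeasureTheory.integral_prod _ (hint f hf)]
  -- mean
  have hmean : ∫ ω, (2/3 - |U ω - V ω| - U ω * (1 - U ω) - V ω * (1 - V ω)) ∂ℙ = 0 := by
    have := key g hgc
    simp only [hg] at this
    rw [this]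
    have h0 : ∀ x ∈ Set.Icc (0:ℝ) 1,
        (∫ y in Set.Icc (0:ℝ) 1, (2/3 - |x - y| - x * (1 - x) - y * (1 - y))) = 0 := by
      intro x hx
      rw [MeasureTheory.integral_Icc_eq_integral_Ioc,
        ← intervalIntegral.integral_of_le (by norm_num : (0:ℝ) ≤ 1)]
      rw [show (fun y => 2/3 - |x - y| - x * (1 - x) - y * (1 - y))
          = fun y => 2/3 - |y - x| - y*(1-y) - x*(1-x) by
        funext y; rw [abs_sub_comm]; ring]
      exact inner_mean x hx.1 hx.2
    rw [MeasureTheory.setIntegral_congr_fun measurableSet_Icc h0]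
    simp
  -- second moment
  have hsq : ∫ ω, (2/3 - |U ω - V ω| - U ω * (1 - U ω) - V ω * (1 - V ω))^2 ∂ℙ = 2/45 := by
    have := key (fun p => (g p)^2) (by fun_prop)
    simp only [hg] at this
    rw [this]
    have h0 : ∀ x ∈ Set.Icc (0:ℝ) 1,
        (∫ y in Set.Icc (0:ℝ) 1, (2/3 - |x - y| - x * (1 - x) - y * (1 - y))^2)
          = 4/45 - 4/3*x^2 + 8/3*x^3 - 4/3*x^4 := by
      intro x hx
      rw [MeasureTheory.integral_Icc_eq_integral_Ioc,
        ← intervalIntegral.integral_of_le (by norm_num : (0:ℝ) ≤ 1)]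
      rw [show (fun y => (2/3 - |x - y| - x * (1 - x) - y * (1 - y))^2)
          = fun y => (2/3 - |y - x| - y*(1-y) - x*(1-x))^2 by
        funext y; rw [abs_sub_comm]; ring]
      exact inner_sq x hx.1 hx.2
    rw [MeasureTheory.setIntegral_congr_fun measurableSet_Icc h0,
      MeasureTheory.integral_Icc_eq_integral_Ioc,
      ← intervalIntegral.integral_of_le (by norm_num : (0:ℝ) ≤ 1)]
    rw [show (fun x : ℝ => 4/45 - 4/3*x^2 + 8/3*x^3 - 4/3*x^4)
        = fun x : ℝ => (4/45 + 0*x + (-4/3)*x^2 + (8/3)*x^3 + (-4/3)*x^4) by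
      funext x; ring]
    rw [poly_int]
    norm_num
  have : (fun ω => 2/3 - |U ω - V ω| - U ω * (1 - U ω) - V ω * (1 - V ω)) ^ 2
      = fun ω => (2/3 - |U ω - V ω| - U ω * (1 - U ω) - V ω * (1 - V ω))^2 := by
    funext ω; simp [pow_two]
  rw [this, hsq, hmean]
  norm_num
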